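/- Let 𝔄 be a Boolean algebra with two operators ◇₀, ◇₁ validating the GLB axioms (□ₙ(□ₙx→x) ≤ □ₙx for n=0,1; □₀x ≤ □₁x; ◇₀x ≤ □₁◇₀x, for all x). If ◇₁ is completely additive, then □₁⊥ = ⊤. (Algebraic core of the 𝒱-incompleteness of GLB.) -/
import Mathlib


/-- The dual box of an operator `f` on a Boolean algebra. -/
def mbox {α : Type*} [BooleanAlgebra α] (f : α → α) (x : α) : α := (f xᶜ)ᶜ

/-- Algebraic core of the 𝒱-incompleteness of GLB: in any BAO validating the
GLB axioms in which `◇₁` is completely additive, `□₁⊥ = ⊤`. -/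
theorem stmt_15 {α : Type*} [BooleanAlgebra α] (f0 f1 : α → α)
    (h0join : ∀ x y : α, f0 (x ⊔ y) = f0 x ⊔ f0 y) (h0bot : f0 ⊥ = ⊥)
    (h1join : ∀ x y : α, f1 (x ⊔ y) = f1 x ⊔ f1 y) (h1bot : f1 ⊥ = ⊥)
    (hlob0 : ∀ x : α, mbox f0 ((mbox f0 x)ᶜ ⊔ x) ≤ mbox f0 x)
    (hlob1 : ∀ x : α, mbox f1 ((mbox f1 x)ᶜ ⊔ x) ≤ mbox f1 x)
    (h01 : ∀ x : α, mbox f0 x ≤ mbox f1 x)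
    (hiii : ∀ x : α, f0 x ≤ mbox f1 (f0 x))
    (hV : ∀ (X : Set α) (s : α), IsLUB X s → IsLUB (f1 '' X) (f1 s)) :
    mbox f1 ⊥ = ⊤ := by
  -- monotonicity of the diamonds
  have mono0 : ∀ x y : α, x ≤ y → f0 x ≤ f0 y := by
    intro x y h
    have : f0 (x ⊔ y) = f0 x ⊔ f0 y := h0join x y
    rw [sup_eq_right.mpr h] at this
    rw [this]; exact le_sup_left
  have mono1 : ∀ x y : α, x ≤ y → f1 x ≤ f1 y := by
    intro x y h
    have : f1 (x ⊔ y) = f1 x ⊔ f1 y := h1join x y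
    rw [sup_eq_right.mpr h] at this
    rw [this]; exact le_sup_left
  -- dual of □₀ ≤ □₁ : ◇₁ ≤ ◇₀
  have dual01 : ∀ x : α, f1 x ≤ f0 x := by
    intro x
    have h := h01 xᶜ
    simp only [mbox, compl_compl] at h
    exact compl_le_compl_iff_le.mp h
  -- axiom (iii) rearranged : ◇₁ ¬◇₀ y ≤ ¬◇₀ y
  have hiii' : ∀ y : α, f1 ((f0 y)ᶜ) ≤ (f0 y)ᶜ := by
    intro y
    have h := hiii y
    simp only [mbox] at h
    exact le_compl_comm.mp h
  -- key: ◇₁ (y ⊓ ¬◇₀ y) = ⊥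
  set g : α → α := fun y => y ⊓ (f0 y)ᶜ with hg
  have key : ∀ y : α, f1 (g y) = ⊥ := by
    intro y
    have h1 : f1 (g y) ≤ f0 y := le_trans (dual01 (g y)) (mono0 _ _ inf_le_left)
    have h2 : f1 (g y) ≤ (f0 y)ᶜ := le_trans (mono1 _ _ inf_le_right) (hiii' y)
    have := le_inf h1 h2
    rwa [inf_compl_eq_bot, le_bot_iff] at this
  -- the range of g has least upper bound ⊤, by Löb for ◇₀
  have lub : IsLUB (Set.range g) (⊤ : α) := by
    constructor
    · intro a _; exact le_top
    · intro b hb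
      have hgb : g bᶜ ≤ b := hb (Set.mem_range_self bᶜ)
      have hbot : g bᶜ = ⊥ := by
        have : g bᶜ ≤ b ⊓ bᶜ := le_inf hgb inf_le_left
        rwa [inf_compl_eq_bot, le_bot_iff] at this
      -- so bᶜ ≤ ◇₀ bᶜ
      have hle : bᶜ ≤ f0 bᶜ := by
        have : bᶜ ⊓ (f0 bᶜ)ᶜ = ⊥ := hbot
        have h2 : bᶜ ≤ (f0 bᶜ)ᶜᶜ := le_compl_iff_disjoint_right.mpr
          (disjoint_iff.mpr this)
        rwa [compl_compl] at h2
      -- Löb for ◇₀ in dual form: ◇₀ bᶜ ≤ ◇₀ (bᶜ ⊓ ¬◇₀ bᶜ)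
      have hl := hlob0 b
      simp only [mbox, compl_compl] at hl
      have hl' : f0 bᶜ ≤ f0 ((f0 bᶜ ⊔ b)ᶜ) := compl_le_compl_iff_le.mp hl
      have : (f0 bᶜ ⊔ b)ᶜ = (f0 bᶜ)ᶜ ⊓ bᶜ := by rw [compl_sup]
      rw [this] at hl'
      have hzero : (f0 bᶜ)ᶜ ⊓ bᶜ = ⊥ := by
        rw [inf_comm]; exact hbot
      rw [hzero, h0bot, le_bot_iff] at hl'
      have : bᶜ = ⊥ := le_bot_iff.mp (hle.trans hl'.le)
      exact le_of_eq (compl_eq_bot.mp this).symm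
  -- complete additivity: f1 ⊤ is the LUB of f1 '' range g = {⊥}
  have hlub2 := hV (Set.range g) ⊤ lub
  have hbotlub : IsLUB (f1 '' Set.range g) (⊥ : α) := by
    constructor
    · rintro a ⟨y, ⟨z, rfl⟩, rfl⟩
      exact le_of_eq (key z)
    · intro b _; exact bot_le
  have htop : f1 ⊤ = ⊥ := hlub2.unique hbotlub
  simp [mbox, htop]
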